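/- Bromwich inversion formula for the tail probability: let X be a real random variable with law having density f ≥ 0 with respect to Lebesgue measure, let a > 0, and define M(t) = ∫_ℝ e^{tx} f(x) dx for complex t with Re(t) = a, assuming ∫_ℝ e^{ax} f(x) dx < ∞. Assume moreover that s ↦ M(a + is) is Lebesgue integrable on ℝ and that the inversion formula f(u) = (1/(2π))·∫_ℝ M(a + is)·e^{−(a+is)u} ds holds for all u ∈ ℝ. Then for every x ∈ ℝ, the tail probability satisfies P(X > x) = ∫_x^∞ f(u) du = (1/(2π))·∫_ℝ M(a + is)·e^{−(a+is)x}/(a + is) ds. -/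

import Mathlib

open MeasureTheory Set

lemma cexp_neg_integral_Ioi {c : ℂ} (hc : 0 < c.re) (x : ℝ) :
    ∫ u in Ioi x, Complex.exp (-c * u) = Complex.exp (-c * x) / c := by
  have hc0 : c ≠ 0 := fun h => by simp [h] at hc
  have hderiv : ∀ u : ℝ, HasDerivAt (fun u : ℝ => -Complex.exp (-c * u) / c)
      (Complex.exp (-c * u)) u := by
    intro u
    have h1 : HasDerivAt (fun u : ℝ => -c * (u : ℂ)) (-c) u := by
      simpa using (Complex.ofRealCLM.hasDerivAt (x := u)).const_mul (-c)
    have h2 := h1.cexp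
    have h3 := h2.neg.div_const c
    exact h3.congr_deriv (by field_simp)
  have hint : IntegrableOn (fun u : ℝ => Complex.exp (-c * u)) (Ioi x) := by
    refine (exp_neg_integrableOn_Ioi x hc).mono'
      ((Complex.continuous_exp.comp
        (continuous_const.mul Complex.continuous_ofReal)).aestronglyMeasurable.restrict) ?_
    filter_upwards with u
    rw [Complex.norm_exp]
    simp
  have htend : Filter.Tendsto (fun u : ℝ => -Complex.exp (-c * u) / c)
      Filter.atTop (nhds 0) := by
    rw [show (0 : ℂ) = -0 / c by simp]
    refine Filter.Tendsto.div_const (Filter.Tendsto.neg ?_) c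
    rw [tendsto_zero_iff_norm_tendsto_zero]
    have hn : ∀ u : ℝ, ‖Complex.exp (-c * u)‖ = Real.exp (-c.re * u) := by
      intro u
      rw [Complex.norm_exp]
      simp
    simp_rw [hn]
    have h2 : Filter.Tendsto (fun u : ℝ => -c.re * u) Filter.atTop Filter.atBot :=
      Filter.Tendsto.const_mul_atTop_of_neg (neg_lt_zero.mpr hc) Filter.tendsto_id
    exact Real.tendsto_exp_atBot.comp h2
  have key := integral_Ioi_of_hasDerivAt_of_tendsto
    (hderiv x).continuousAt.continuousWithinAt
    (fun u _ => hderiv u) hint htend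
  rw [key]
  field_simp
  ring

/-- Bromwich inversion formula for the tail probability
`P(X > x) = ∫_x^∞ f = (1/2π) ∫_ℝ M(a+is) e^{-(a+is)x}/(a+is) ds`. -/
theorem bromwich_tail_probability {Ω : Type*} [MeasurableSpace Ω] (ℙ : Measure Ω)
    [IsProbabilityMeasure ℙ] (X : Ω → ℝ) (hX : Measurable X)
    (f : ℝ → ℝ) (hf_nonneg : ∀ x, 0 ≤ f x) (hf_meas : Measurable f)
    (hlaw : ℙ.map X = volume.withDensity (fun x => ENNReal.ofReal (f x)))
    (a : ℝ) (ha : 0 < a) (M : ℂ → ℂ)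
    (hM : ∀ t : ℂ, t.re = a → M t = ∫ x : ℝ, Complex.exp (t * x) * (f x : ℂ))
    (hInt_a : Integrable (fun x : ℝ => Real.exp (a * x) * f x))
    (hM_int : Integrable (fun s : ℝ => M ((a : ℂ) + (s : ℂ) * Complex.I)))
    (hInv : ∀ u : ℝ, (f u : ℂ) = (1 / (2 * (Real.pi : ℂ))) *
      ∫ s : ℝ, M ((a : ℂ) + (s : ℂ) * Complex.I) *
        Complex.exp (-((a : ℂ) + (s : ℂ) * Complex.I) * (u : ℂ)))
    (x : ℝ) :
    (ℙ {ω | x < X ω}).toReal = ∫ u in Ioi x, f u ∧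
    ((∫ u in Ioi x, f u : ℝ) : ℂ) = (1 / (2 * (Real.pi : ℂ))) *
      ∫ s : ℝ, M ((a : ℂ) + (s : ℂ) * Complex.I) *
        Complex.exp (-((a : ℂ) + (s : ℂ) * Complex.I) * (x : ℂ))
          / ((a : ℂ) + (s : ℂ) * Complex.I) := by
  constructor
  · have h1 : {ω | x < X ω} = X ⁻¹' (Ioi x) := rfl
    rw [h1, ← Measure.map_apply hX measurableSet_Ioi, hlaw,
      withDensity_apply _ measurableSet_Ioi,
      integral_eq_lintegral_of_nonneg_ae
        (Filter.Eventually.of_forall fun u => hf_nonneg u)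
        hf_meas.aestronglyMeasurable.restrict]
  · set c : ℝ → ℂ := fun s => (a : ℂ) + (s : ℂ) * Complex.I with hc
    have hcre : ∀ s : ℝ, (c s).re = a := by intro s; simp [hc]
    have hcpos : ∀ s : ℝ, 0 < (c s).re := fun s => by rw [hcre]; exact ha
    have hmeas : AEStronglyMeasurable
        (fun p : ℝ × ℝ => M (c p.2) * Complex.exp (-(c p.2) * p.1))
        ((volume.restrict (Ioi x)).prod volume) := by
      have h1 : AEStronglyMeasurable (fun p : ℝ × ℝ => M (c p.2))
          ((volume.restrict (Ioi x)).prod volume) :=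
        hM_int.aestronglyMeasurable.comp_snd
      have h2 : Continuous (fun p : ℝ × ℝ => Complex.exp (-(c p.2) * p.1)) := by
        apply Complex.continuous_exp.comp
        fun_prop
      exact h1.mul h2.aestronglyMeasurable
    have hbound : Integrable
        (fun p : ℝ × ℝ => Real.exp (-a * p.1) * ‖M (c p.2)‖)
        ((volume.restrict (Ioi x)).prod volume) :=
      Integrable.mul_prod (exp_neg_integrableOn_Ioi x ha) hM_int.norm
    have hjoint : Integrable
        (fun p : ℝ × ℝ => M (c p.2) * Complex.exp (-(c p.2) * p.1))
        ((volume.restrict (Ioi x)).prod volume) := by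
      refine hbound.mono' hmeas ?_
      filter_upwards with p
      rw [norm_mul, Complex.norm_exp]
      have hre : (-(c p.2) * (p.1 : ℂ)).re = -a * p.1 := by simp [hc]
      rw [hre, mul_comm]
    have hfc : ((∫ u in Ioi x, f u : ℝ) : ℂ) = ∫ u in Ioi x, (f u : ℂ) :=
      (integral_ofReal).symm
    rw [hfc]
    calc ∫ u in Ioi x, (f u : ℂ)
        = ∫ u in Ioi x, (1 / (2 * (Real.pi : ℂ))) *
            ∫ s : ℝ, M (c s) * Complex.exp (-(c s) * u) := by
          refine setIntegral_congr_fun measurableSet_Ioi fun u _ => ?_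
          simpa [hc] using hInv u
      _ = (1 / (2 * (Real.pi : ℂ))) * ∫ u in Ioi x,
            ∫ s : ℝ, M (c s) * Complex.exp (-(c s) * u) := integral_const_mul _ _
      _ = (1 / (2 * (Real.pi : ℂ))) * ∫ s : ℝ,
            ∫ u in Ioi x, M (c s) * Complex.exp (-(c s) * u) := by
          rw [integral_integral_swap hjoint]
      _ = (1 / (2 * (Real.pi : ℂ))) * ∫ s : ℝ,
            M (c s) * Complex.exp (-(c s) * x) / (c s) := by
          congr 1
          refine integral_congr_ae (Filter.Eventually.of_forall fun s => ?_)
          show (∫ u in Ioi x, M (c s) * Complex.exp (-(c s) * u))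
            = M (c s) * Complex.exp (-(c s) * x) / (c s)
          rw [integral_const_mul, cexp_neg_integral_Ioi (hcpos s) x, mul_div_assoc]
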